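/- Let μ > 0 and 0 < d < 1/2, and define r₀ = (1/2 + d)√(μ/d). Then 2√(μd) ≤ r₀ ≤ √(μ/d), and for the optimal relaxation variable z*(r) (equal to 0 for |r| ≤ 2√(μd), to (|r|√(d/μ) − 2d)/(1 − 2d) for 2√(μd) ≤ |r| ≤ √(μ/d), and to 1 for |r| ≥ √(μ/d)) one has z*(r) = 1/2 if and only if |r| = r₀. Moreover, the map s ↦ φ̄(s; d) is strictly increasing on [0, √(μ/d)], and φ̄(r₀; d) = μ(3/4 − d − d²)/(1 − 2d). -/

import Mathlib

/-- The perspective-relaxation loss φ̄(r; d) for parameters μ > 0, d ∈ (0,1/2). -/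
noncomputable def phiBar (mu d r : ℝ) : ℝ :=
  if |r| ≤ 2 * Real.sqrt (mu * d) then (1/2) * r^2
  else if |r| < Real.sqrt (mu / d) then
    (-(d * r^2) + 2 * Real.sqrt (mu * d) * |r| - 2 * mu * d) / (1 - 2*d)
  else mu

/-- The optimal relaxation variable z*(r). -/
noncomputable def zstar (mu d r : ℝ) : ℝ :=
  if |r| ≤ 2 * Real.sqrt (mu * d) then 0
  else if |r| ≤ Real.sqrt (mu / d) then
    (|r| * Real.sqrt (d / mu) - 2*d) / (1 - 2*d)
  else 1

set_option maxHeartbeats 1000000 in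
/-- with r₀ = (1/2 + d)√(μ/d), one has 2√(μd) ≤ r₀ ≤ √(μ/d);
z*(r) = 1/2 iff |r| = r₀; φ̄(·; d) is strictly increasing on [0, √(μ/d)];
and φ̄(r₀; d) = μ(3/4 − d − d²)/(1 − 2d). -/
theorem stmt_18 (mu d : ℝ) (hmu : 0 < mu) (hd0 : 0 < d) (hd : d < 1/2)
    (r0 : ℝ) (hr0 : r0 = (1/2 + d) * Real.sqrt (mu / d)) :
    (2 * Real.sqrt (mu * d) ≤ r0 ∧ r0 ≤ Real.sqrt (mu / d)) ∧
    (∀ r : ℝ, zstar mu d r = 1/2 ↔ |r| = r0) ∧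
    StrictMonoOn (fun s => phiBar mu d s) (Set.Icc 0 (Real.sqrt (mu / d))) ∧
    phiBar mu d r0 = mu * (3/4 - d - d^2) / (1 - 2*d) := by
  have hd' : (0:ℝ) < 1 - 2*d := by linarith
  have hmud : 0 < mu / d := div_pos hmu hd0
  set b := Real.sqrt (mu / d) with hb_def
  have hb0 : 0 < b := Real.sqrt_pos.mpr hmud
  have hb2 : b^2 = mu / d := Real.sq_sqrt hmud.le
  have hab : d * b * b = mu := by
    have h := hb2
    field_simp at h
    linear_combination h
  have ha : Real.sqrt (mu * d) = d * b := by
    rw [hb_def, show mu * d = d^2 * (mu / d) by field_simp,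
        Real.sqrt_mul (sq_nonneg d), Real.sqrt_sq hd0.le]
  have hinv : Real.sqrt (d / mu) = 1 / b := by
    rw [hb_def, show d / mu = (mu / d)⁻¹ by field_simp, Real.sqrt_inv, one_div]
  clear_value b
  have h2ar0 : 2 * (d * b) < r0 := by rw [hr0]; nlinarith
  have hr0b' : r0 < b := by rw [hr0]; nlinarith
  have hr00 : 0 ≤ r0 := by rw [hr0]; positivity
  refine ⟨⟨by rw [ha]; linarith, hr0b'.le⟩, ?_, ?_, ?_⟩
  · intro r
    simp only [zstar, ha, hinv, ← hb_def]
    split_ifs with h1 h2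
    · constructor
      · intro h; norm_num at h
      · intro h; rw [h] at h1; linarith
    · rw [div_eq_iff hd'.ne']
      constructor
      · intro h
        field_simp [hb0.ne'] at h
        rw [hr0]; linarith
      · intro h
        rw [h, hr0]
        field_simp
        ring
    · constructor
      · intro h; norm_num at h
      · intro h; rw [h] at h2; exact absurd hr0b'.le h2
  · intro x hx y hy hxy
    obtain ⟨hx0, hxb⟩ := hx
    obtain ⟨hy0, hyb⟩ := hy
    simp only [phiBar, ha, ← hb_def, abs_of_nonneg hx0, abs_of_nonneg hy0]
    split_ifs with h1 h2 h3 h4 h5 h6 h7 h8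
    all_goals try linarith
    all_goals try push_neg at *
    -- x ≤ 2db, y ≤ 2db
    · nlinarith [mul_pos (sub_pos.mpr hxy) (show (0:ℝ) < x + y by linarith)]
    -- x ≤ 2db, 2db < y < b
    · rw [lt_div_iff₀ hd']
      nlinarith [mul_pos hd0 (mul_pos (show (0:ℝ) < y - 2*(d*b) by linarith)
          (show (0:ℝ) < 2*b*(1-d) - y by nlinarith [mul_pos hb0 hd'])),
        mul_nonneg (mul_nonneg (show (0:ℝ) ≤ 2*(d*b) - x by linarith)
          (show (0:ℝ) ≤ 2*(d*b) + x by linarith)) hd'.le, hab]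
    -- x ≤ 2db, y ≥ b
    · nlinarith [mul_nonneg (show (0:ℝ) ≤ 2*(d*b) - x by linarith)
          (show (0:ℝ) ≤ 2*(d*b) + x by linarith),
        mul_pos (mul_pos hd0 (mul_pos hb0 hb0)) hd', hab]
    -- both middle
    · rw [div_lt_div_iff_of_pos_right hd']
      nlinarith [mul_pos (mul_pos hd0 (mul_pos (sub_pos.mpr hxy)
          (show (0:ℝ) < 2*b - (x + y) by linarith))) hd']
    -- x middle, y ≥ b
    · rw [div_lt_iff₀ hd']
      nlinarith [mul_pos hd0 (mul_pos (sub_pos.mpr h4) (sub_pos.mpr h4)), hab]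
  · have h1 : ¬ (r0 ≤ 2 * (d * b)) := by linarith
    have h2 : r0 < b := hr0b'
    simp only [phiBar, ha, ← hb_def, abs_of_nonneg hr00, if_neg h1, if_pos h2]
    rw [div_eq_div_iff hd'.ne' hd'.ne', hr0]
    linear_combination ((3/4 + d - d^2) * (1 - 2*d)) * hab
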